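/- arXiv:1311.2529 — 3 statements merged into one kernel-verified Lean document; each statement's English description precedes it below -/
import Mathlib

section
/- Let A = [[1,2],[0,1]] and B = [[1,0],[2,1]] in SL(2,ℤ), and let π: SL(2,ℤ) → PSL(2,ℤ) be the quotient map by the center {±I}. Then the group homomorphism from the free group on two generators to PSL(2,ℤ) sending the generators to π(A) and π(B) is injective, and its image equals π(Γ(2)), the image of the principal congruence subgroup of level 2. In particular, Γ(2)/{±I} is a free group of rank 2, freely generated by the images of A and B. -/
open Matrix

namespace Sanov

abbrev SL2 := Matrix.SpecialLinearGroup (Fin 2) ℤ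

def Amat : SL2 := ⟨!![1, 2; 0, 1], by norm_num [Matrix.det_fin_two_of]⟩
def Bmat : SL2 := ⟨!![1, 0; 2, 1], by norm_num [Matrix.det_fin_two_of]⟩

abbrev Vec := {v : Fin 2 → ℤ // v ≠ 0}

lemma mulVec_ne_zero (g : SL2) {v : Fin 2 → ℤ} (hv : v ≠ 0) :
    (g : Matrix (Fin 2) (Fin 2) ℤ).mulVec v ≠ 0 := by
  intro h
  apply hv
  calc v = ((g⁻¹ * g : SL2) : Matrix (Fin 2) (Fin 2) ℤ).mulVec v := by
            rw [inv_mul_cancel]; simp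
    _ = ((g⁻¹ : SL2) : Matrix (Fin 2) (Fin 2) ℤ).mulVec
          ((g : Matrix (Fin 2) (Fin 2) ℤ).mulVec v) := by
            rw [Matrix.SpecialLinearGroup.coe_mul, ← Matrix.mulVec_mulVec]
    _ = 0 := by rw [h, Matrix.mulVec_zero]

instance vecAction : MulAction SL2 Vec where
  smul g v := ⟨(g : Matrix (Fin 2) (Fin 2) ℤ).mulVec v.1, mulVec_ne_zero g v.2⟩
  one_smul v := Subtype.ext <| by
    show ((1 : SL2) : Matrix (Fin 2) (Fin 2) ℤ).mulVec v.1 = v.1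
    simp
  mul_smul g h v := Subtype.ext <| by
    show ((g * h : SL2) : Matrix (Fin 2) (Fin 2) ℤ).mulVec v.1 =
      (g : Matrix (Fin 2) (Fin 2) ℤ).mulVec ((h : Matrix (Fin 2) (Fin 2) ℤ).mulVec v.1)
    rw [Matrix.SpecialLinearGroup.coe_mul, ← Matrix.mulVec_mulVec]

lemma smul_val (g : SL2) (v : Vec) :
    (g • v).1 = (g : Matrix (Fin 2) (Fin 2) ℤ).mulVec v.1 := rfl

instance pmSetoid : Setoid Vec :=
  ⟨fun v w => v.1 = w.1 ∨ v.1 = -w.1, by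
    constructor
    · intro v; exact Or.inl rfl
    · rintro v w (h | h)
      · exact Or.inl h.symm
      · exact Or.inr (by rw [h, neg_neg])
    · rintro u v w (h1 | h1) (h2 | h2)
      · exact Or.inl (h1.trans h2)
      · exact Or.inr (h1.trans h2)
      · exact Or.inr (by rw [h1, h2])
      · exact Or.inl (by rw [h1, h2, neg_neg])⟩

abbrev PVec := Quotient pmSetoid

instance pvecActionSL : MulAction SL2 PVec where
  smul g := Quotient.map (fun v => g • v) (by
    rintro v w (h | h)
    · exact Or.inl (by simp [smul_val, h])
    · exact Or.inr (by simp [smul_val, h, Matrix.mulVec_neg]))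
  one_smul q := by
    induction q using Quotient.ind with
    | _ v => show Quotient.map _ _ _ = _; simp [Quotient.map_mk]
  mul_smul g h q := by
    induction q using Quotient.ind with
    | _ v =>
      show Quotient.map _ _ _ = Quotient.map _ _ (Quotient.map _ _ _)
      simp [Quotient.map_mk, mul_smul]

abbrev PSL := SL2 ⧸ Subgroup.center SL2

lemma center_smul_trivial {g : SL2} (hg : g ∈ Subgroup.center SL2) (q : PVec) :
    g • q = q := by
  obtain ⟨r, hr, hrg⟩ := Matrix.SpecialLinearGroup.mem_center_iff.mp hg
  simp only [Fintype.card_fin] at hr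
  have hr2 : r = 1 ∨ r = -1 := Int.isUnit_iff.mp (IsUnit.of_mul_eq_one (a := r) r (by nlinarith))
  induction q using Quotient.ind with
  | _ v =>
    show Quotient.map _ _ _ = _
    rw [Quotient.map_mk]
    apply Quotient.sound
    have hv : (g • v).1 = r • v.1 := by
      rw [smul_val, ← hrg]
      simp [Matrix.scalar, Matrix.mulVec_diagonal]
    rcases hr2 with h | h
    · left; rw [hv, h, one_smul]
    · right; rw [hv, h]
      funext i
      simp

def jhom : SL2 →* Equiv.Perm PVec := MulAction.toPermHom SL2 PVec

def jbar : PSL →* Equiv.Perm PVec :=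
  QuotientGroup.lift (Subgroup.center SL2) jhom
    (fun g hg => Equiv.ext fun q => center_smul_trivial hg q)

instance pslAction : MulAction PSL PVec := MulAction.compHom _ jbar

lemma psl_smul (g : SL2) (q : PVec) :
    (QuotientGroup.mk' (Subgroup.center SL2) g) • q = g • q := rfl

-- predicates on ℤ² defining the ping-pong sets
def PA (v : Fin 2 → ℤ) : Prop := v 1 = 0 ∨ (0 < v 0 * v 1 ∧ (v 1).natAbs ≤ (v 0).natAbs)
def QA (v : Fin 2 → ℤ) : Prop := v 0 * v 1 < 0 ∧ (v 1).natAbs < (v 0).natAbs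
def PB (v : Fin 2 → ℤ) : Prop := v 0 = 0 ∨ (0 < v 0 * v 1 ∧ (v 0).natAbs < (v 1).natAbs)
def QB (v : Fin 2 → ℤ) : Prop := v 0 * v 1 < 0 ∧ (v 0).natAbs ≤ (v 1).natAbs

lemma PA_neg (v : Fin 2 → ℤ) : PA (-v) ↔ PA v := by
  simp [PA, neg_mul_neg]
lemma QA_neg (v : Fin 2 → ℤ) : QA (-v) ↔ QA v := by
  simp [QA, neg_mul_neg]
lemma PB_neg (v : Fin 2 → ℤ) : PB (-v) ↔ PB v := by
  simp [PB, neg_mul_neg]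
lemma QB_neg (v : Fin 2 → ℤ) : QB (-v) ↔ QB v := by
  simp [QB, neg_mul_neg]

def liftP (P : (Fin 2 → ℤ) → Prop) (hP : ∀ v, P (-v) ↔ P v) : Set PVec :=
  fun q => Quotient.liftOn q (fun v => P v.1) (by
    rintro v w (h | h)
    · show P v.1 = P w.1; rw [h]
    · show P v.1 = P w.1; rw [h]
      exact propext (hP w.1))

lemma mem_liftP {P : (Fin 2 → ℤ) → Prop} {hP : ∀ v, P (-v) ↔ P v} (v : Vec) :
    (⟦v⟧ : PVec) ∈ liftP P hP ↔ P v.1 := Iff.rfl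

def XS : Bool → Set PVec := fun b => if b then liftP PB PB_neg else liftP PA PA_neg
def YS : Bool → Set PVec := fun b => if b then liftP QB QB_neg else liftP QA QA_neg

lemma mulVec_entry0 (m : Matrix (Fin 2) (Fin 2) ℤ) (v : Fin 2 → ℤ) :
    m.mulVec v 0 = m 0 0 * v 0 + m 0 1 * v 1 := by
  simp [Matrix.mulVec, dotProduct, Fin.sum_univ_two]
lemma mulVec_entry1 (m : Matrix (Fin 2) (Fin 2) ℤ) (v : Fin 2 → ℤ) :
    m.mulVec v 1 = m 1 0 * v 0 + m 1 1 * v 1 := by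
  simp [Matrix.mulVec, dotProduct, Fin.sum_univ_two]

lemma pvec_smul_mk (g : SL2) (v : Vec) : g • (⟦v⟧ : PVec) = ⟦g • v⟧ := rfl

lemma AmulVec (v : Fin 2 → ℤ) :
    (Amat : Matrix (Fin 2) (Fin 2) ℤ).mulVec v = ![v 0 + 2 * v 1, v 1] := by
  funext i; fin_cases i <;>
    simp [Amat, mulVec_entry0, mulVec_entry1]
lemma AinvmulVec (v : Fin 2 → ℤ) :
    ((Amat⁻¹ : SL2) : Matrix (Fin 2) (Fin 2) ℤ).mulVec v = ![v 0 - 2 * v 1, v 1] := by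
  rw [Matrix.SpecialLinearGroup.coe_inv, Matrix.adjugate_fin_two]
  funext i; fin_cases i <;>
    simp [Amat, mulVec_entry0, mulVec_entry1] <;> ring
lemma BmulVec (v : Fin 2 → ℤ) :
    (Bmat : Matrix (Fin 2) (Fin 2) ℤ).mulVec v = ![v 0, v 1 + 2 * v 0] := by
  funext i; fin_cases i <;>
    simp [Bmat, mulVec_entry0, mulVec_entry1] <;> ring
lemma BinvmulVec (v : Fin 2 → ℤ) :
    ((Bmat⁻¹ : SL2) : Matrix (Fin 2) (Fin 2) ℤ).mulVec v = ![v 0, v 1 - 2 * v 0] := by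
  rw [Matrix.SpecialLinearGroup.coe_inv, Matrix.adjugate_fin_two]
  funext i; fin_cases i <;>
    simp [Bmat, mulVec_entry0, mulVec_entry1] <;> ring

lemma vec_ne (v : Vec) : ¬(v.1 0 = 0 ∧ v.1 1 = 0) := by
  rintro ⟨h0, h1⟩
  apply v.2
  funext i; fin_cases i <;> assumption

def afun : Bool → PSL :=
  fun b => if b then QuotientGroup.mk' (Subgroup.center SL2) Bmat
    else QuotientGroup.mk' (Subgroup.center SL2) Amat

lemma pingpong : Function.Injective (FreeGroup.lift afun) := by
  apply FreeGroup.injective_lift_of_ping_pong afun XS YS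
  · intro i
    cases i
    · exact ⟨⟦⟨![1, 0], by intro h; simpa using congrFun h 0⟩⟧, by
        show PA ![1,0]; left; rfl⟩
    · exact ⟨⟦⟨![0, 1], by intro h; simpa using congrFun h 1⟩⟧, by
        show PB ![0,1]; left; rfl⟩
  · intro i j hij
    show Disjoint _ _
    rw [Set.disjoint_left]
    intro q hq hq'
    induction q using Quotient.ind with
    | _ v =>
      have hv := vec_ne v
      cases i <;> cases j <;> simp at hij <;> try exact hij rfl
      · have h1 : PA v.1 := hq
        have h2 : PB v.1 := hq'
        unfold PA at h1; unfold PB at h2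
        simp only [mul_pos_iff] at h1 h2
        omega
      · have h1 : PB v.1 := hq
        have h2 : PA v.1 := hq'
        unfold PB at h1; unfold PA at h2
        simp only [mul_pos_iff] at h1 h2
        omega
  · intro i j hij
    show Disjoint _ _
    rw [Set.disjoint_left]
    intro q hq hq'
    induction q using Quotient.ind with
    | _ v =>
      cases i <;> cases j <;> simp at hij <;> try exact hij rfl
      · have h1 : QA v.1 := hq
        have h2 : QB v.1 := hq'
        unfold QA at h1; unfold QB at h2
        simp only [mul_neg_iff] at h1 h2
        omega
      · have h1 : QB v.1 := hq
        have h2 : QA v.1 := hq'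
        unfold QB at h1; unfold QA at h2
        simp only [mul_neg_iff] at h1 h2
        omega
  · intro i j
    show Disjoint _ _
    rw [Set.disjoint_left]
    intro q hq hq'
    induction q using Quotient.ind with
    | _ v =>
      have hv := vec_ne v
      cases i <;> cases j
      · have h1 : PA v.1 := hq
        have h2 : QA v.1 := hq'
        unfold PA at h1; unfold QA at h2
        simp only [mul_pos_iff] at h1; simp only [mul_neg_iff] at h2
        omega
      · have h1 : PA v.1 := hq
        have h2 : QB v.1 := hq'
        unfold PA at h1; unfold QB at h2
        simp only [mul_pos_iff] at h1; simp only [mul_neg_iff] at h2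
        omega
      · have h1 : PB v.1 := hq
        have h2 : QA v.1 := hq'
        unfold PB at h1; unfold QA at h2
        simp only [mul_pos_iff] at h1; simp only [mul_neg_iff] at h2
        omega
      · have h1 : PB v.1 := hq
        have h2 : QB v.1 := hq'
        unfold PB at h1; unfold QB at h2
        simp only [mul_pos_iff] at h1; simp only [mul_neg_iff] at h2
        omega
  · intro i
    rintro q ⟨p, hp, rfl⟩
    induction p using Quotient.ind with
    | _ v =>
      cases i
      · have hnq : ¬ QA v.1 := hp
        show PA ((Amat • v).1)
        rw [smul_val, AmulVec]
        unfold QA at hnq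
        simp only [PA, Matrix.cons_val_zero, Matrix.cons_val_one, Matrix.head_cons]
        simp only [mul_pos_iff, mul_neg_iff] at *
        omega
      · have hnq : ¬ QB v.1 := hp
        show PB ((Bmat • v).1)
        rw [smul_val, BmulVec]
        unfold QB at hnq
        simp only [PB, Matrix.cons_val_zero, Matrix.cons_val_one, Matrix.head_cons]
        simp only [mul_pos_iff, mul_neg_iff] at *
        omega
  · intro i
    rintro q ⟨p, hp, rfl⟩
    induction p using Quotient.ind with
    | _ v =>
      cases i
      · have hnq : ¬ PA v.1 := hp
        show QA ((Amat⁻¹ • v).1)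
        rw [smul_val, AinvmulVec]
        unfold PA at hnq
        simp only [QA, Matrix.cons_val_zero, Matrix.cons_val_one, Matrix.head_cons]
        simp only [mul_pos_iff] at hnq
        simp only [mul_neg_iff]
        omega
      · have hnq : ¬ PB v.1 := hp
        show QB ((Bmat⁻¹ • v).1)
        rw [smul_val, BinvmulVec]
        unfold PB at hnq
        simp only [QB, Matrix.cons_val_zero, Matrix.cons_val_one, Matrix.head_cons]
        simp only [mul_pos_iff] at hnq
        simp only [mul_neg_iff]
        omega

def negI : SL2 := ⟨-1, by simp [Matrix.det_neg]⟩

lemma negI_mem_center : negI ∈ Subgroup.center SL2 :=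
  Subgroup.mem_center_iff.mpr fun g => Subtype.ext <| by
    rw [Matrix.SpecialLinearGroup.coe_mul, Matrix.SpecialLinearGroup.coe_mul]
    simp [negI]

lemma Apow (m : ℤ) : ((Amat ^ m : SL2) : Matrix (Fin 2) (Fin 2) ℤ) = !![1, 2*m; 0, 1] := by
  induction m using Int.induction_on with
  | zero => simp [Matrix.one_fin_two]
  | succ k ih =>
      rw [_root_.zpow_add_one, Matrix.SpecialLinearGroup.coe_mul, ih]
      simp [Amat, Matrix.mul_fin_two]
      ring
  | pred k ih =>
      rw [_root_.zpow_sub_one, Matrix.SpecialLinearGroup.coe_mul, ih]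
      have : ((Amat⁻¹ : SL2) : Matrix (Fin 2) (Fin 2) ℤ) = !![1, -2; 0, 1] := by
        rw [Matrix.SpecialLinearGroup.coe_inv, Matrix.adjugate_fin_two]
        simp [Amat]
      rw [this]
      simp [Matrix.mul_fin_two]
      ring

lemma Bpow (m : ℤ) : ((Bmat ^ m : SL2) : Matrix (Fin 2) (Fin 2) ℤ) = !![1, 0; 2*m, 1] := by
  induction m using Int.induction_on with
  | zero => simp [Matrix.one_fin_two]
  | succ k ih =>
      rw [_root_.zpow_add_one, Matrix.SpecialLinearGroup.coe_mul, ih]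
      simp [Bmat, Matrix.mul_fin_two]
      ring
  | pred k ih =>
      rw [_root_.zpow_sub_one, Matrix.SpecialLinearGroup.coe_mul, ih]
      have : ((Bmat⁻¹ : SL2) : Matrix (Fin 2) (Fin 2) ℤ) = !![1, 0; -2, 1] := by
        rw [Matrix.SpecialLinearGroup.coe_inv, Matrix.adjugate_fin_two]
        simp [Bmat]
      rw [this]
      simp [Matrix.mul_fin_two]
      ring

lemma mod2_one {a : ℤ} (h : (a : ZMod 2) = 1) : a % 2 = 1 := by
  have h2 : ((a - 1 : ℤ) : ZMod 2) = 0 := by push_cast; rw [h]; ring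
  have := (ZMod.intCast_zmod_eq_zero_iff_dvd _ 2).mp h2
  omega

lemma mod2_zero {a : ℤ} (h : (a : ZMod 2) = 0) : a % 2 = 0 := by
  have := (ZMod.intCast_zmod_eq_zero_iff_dvd _ 2).mp h
  omega

lemma hA2 : Amat ∈ CongruenceSubgroup.Gamma 2 := by
  rw [CongruenceSubgroup.Gamma_mem]
  refine ⟨?_, ?_, ?_, ?_⟩ <;> · show ((Amat.1 _ _ : ℤ) : ZMod 2) = _; simp [Amat]; try decide

lemma hB2 : Bmat ∈ CongruenceSubgroup.Gamma 2 := by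
  rw [CongruenceSubgroup.Gamma_mem]
  refine ⟨?_, ?_, ?_, ?_⟩ <;> · show ((Bmat.1 _ _ : ℤ) : ZMod 2) = _; simp [Bmat]; try decide

lemma exists_shrink : ∀ (N : ℕ) (a c : ℤ), c ≠ 0 → a.natAbs = N →
    ∃ n : ℤ, (a + 2*n*c).natAbs ≤ c.natAbs := by
  intro N
  induction N using Nat.strong_induction_on with
  | _ N ih =>
  intro a c hc ha
  by_cases h : a.natAbs ≤ c.natAbs
  · exact ⟨0, by simpa using h⟩
  · have hlt : (a + 2*(if 0 ≤ a * c then -1 else 1)*c).natAbs < a.natAbs := by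
      by_cases hac : 0 ≤ a * c
      · rw [if_pos hac]
        rcases mul_nonneg_iff.mp hac with ⟨h1, h2⟩ | ⟨h1, h2⟩ <;> omega
      · rw [if_neg hac]
        push_neg at hac
        rcases mul_neg_iff.mp hac with ⟨h1, h2⟩ | ⟨h1, h2⟩ <;> omega
    obtain ⟨n, hn⟩ :=
      ih ((a + 2*(if 0 ≤ a * c then -1 else 1)*c).natAbs) (by omega)
        (a + 2*(if 0 ≤ a * c then -1 else 1)*c) c hc rfl
    refine ⟨(if 0 ≤ a * c then -1 else 1) + n, ?_⟩
    have he : a + 2*((if 0 ≤ a * c then -1 else 1) + n)*c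
        = (a + 2*(if 0 ≤ a * c then -1 else 1)*c) + 2*n*c := by ring
    rw [he]
    exact hn

def psi : FreeGroup Bool →* SL2 := FreeGroup.lift (fun b : Bool => if b then Bmat else Amat)

lemma psiA (k : ℤ) : psi (FreeGroup.of false ^ k) = Amat ^ k := by
  rw [map_zpow]; simp [psi]

lemma psiB (k : ℤ) : psi (FreeGroup.of true ^ k) = Bmat ^ k := by
  rw [map_zpow]; simp [psi]

lemma mul_apply_fin2 (X Y : Matrix (Fin 2) (Fin 2) ℤ) (i j : Fin 2) :
    (X * Y) i j = X i 0 * Y 0 j + X i 1 * Y 1 j := by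
  simp [Matrix.mul_apply, Fin.sum_univ_two]

lemma key : ∀ (N : ℕ) (M : SL2), M ∈ CongruenceSubgroup.Gamma 2 →
    ((M : Matrix (Fin 2) (Fin 2) ℤ) 1 0).natAbs = N →
    ∃ w : FreeGroup Bool, psi w = M ∨ psi w = negI * M := by
  intro N
  induction N using Nat.strong_induction_on with
  | _ N ih =>
  intro M hM hN
  obtain ⟨h00, h01, h10, h11⟩ := CongruenceSubgroup.Gamma_mem.mp hM
  have ha : ((M : Matrix (Fin 2) (Fin 2) ℤ) 0 0) % 2 = 1 := mod2_one h00
  have hb : ((M : Matrix (Fin 2) (Fin 2) ℤ) 0 1) % 2 = 0 := mod2_zero h01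
  have hcp : ((M : Matrix (Fin 2) (Fin 2) ℤ) 1 0) % 2 = 0 := mod2_zero h10
  have hd : ((M : Matrix (Fin 2) (Fin 2) ℤ) 1 1) % 2 = 1 := mod2_one h11
  by_cases hc : (M : Matrix (Fin 2) (Fin 2) ℤ) 1 0 = 0
  · have hdet := M.2
    rw [Matrix.det_fin_two, hc, mul_zero, sub_zero] at hdet
    rcases Int.eq_one_or_neg_one_of_mul_eq_one' hdet with ⟨ha1, hd1⟩ | ⟨ha1, hd1⟩
    · refine ⟨FreeGroup.of false ^ (((M : Matrix (Fin 2) (Fin 2) ℤ) 0 1) / 2), Or.inl ?_⟩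
      apply Subtype.ext
      rw [psiA, Apow]
      ext i j
      fin_cases i <;> fin_cases j <;>
        simp [Matrix.cons_val_zero, Matrix.cons_val_one, Matrix.head_cons] <;>
        omega
    · refine ⟨FreeGroup.of false ^ (-(((M : Matrix (Fin 2) (Fin 2) ℤ) 0 1) / 2)), Or.inr ?_⟩
      apply Subtype.ext
      rw [psiA, Apow]
      have hneg : ((negI * M : SL2) : Matrix (Fin 2) (Fin 2) ℤ)
          = -(M : Matrix (Fin 2) (Fin 2) ℤ) := by
        rw [Matrix.SpecialLinearGroup.coe_mul]
        show (-1 : Matrix (Fin 2) (Fin 2) ℤ) * _ = _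
        rw [neg_one_mul]
      rw [hneg]
      ext i j
      fin_cases i <;> fin_cases j <;>
        simp [Matrix.cons_val_zero, Matrix.cons_val_one, Matrix.head_cons] <;>
        omega
  · -- inductive step
    set c : ℤ := (M : Matrix (Fin 2) (Fin 2) ℤ) 1 0 with hcdef
    set a : ℤ := (M : Matrix (Fin 2) (Fin 2) ℤ) 0 0 with hadef
    obtain ⟨m, hm⟩ := exists_shrink a.natAbs a c hc rfl
    have he1mod : (a + 2*m*c) % 2 = 1 := by
      obtain ⟨t, ht⟩ : ∃ t : ℤ, a + 2*m*c = a + 2*t := ⟨m*c, by ring⟩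
      omega
    have hcmod2 : c % 2 = 0 := hcp
    have he1lt : (a + 2*m*c).natAbs < c.natAbs := by omega
    have he1ne : a + 2*m*c ≠ 0 := by omega
    obtain ⟨n, hn⟩ := exists_shrink c.natAbs c (a + 2*m*c) he1ne rfl
    have hMa : ((Amat ^ m * M : SL2) : Matrix (Fin 2) (Fin 2) ℤ) 0 0 = a + 2*m*c := by
      rw [Matrix.SpecialLinearGroup.coe_mul, Apow, mul_apply_fin2]
      simp
      try ring
    have hMa10 : ((Amat ^ m * M : SL2) : Matrix (Fin 2) (Fin 2) ℤ) 1 0 = c := by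
      rw [Matrix.SpecialLinearGroup.coe_mul, Apow, mul_apply_fin2]
      simp
      exact hcdef.symm
    have hM10 : ((Bmat ^ n * (Amat ^ m * M) : SL2) : Matrix (Fin 2) (Fin 2) ℤ) 1 0
        = c + 2*n*(a + 2*m*c) := by
      rw [Matrix.SpecialLinearGroup.coe_mul, Bpow, mul_apply_fin2,
        show ((!![1, 0; 2*n, 1] : Matrix (Fin 2) (Fin 2) ℤ) 1 0) = 2*n by simp,
        show ((!![1, 0; 2*n, 1] : Matrix (Fin 2) (Fin 2) ℤ) 1 1) = 1 by simp,
        hMa, hMa10]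
      ring
    have hmem : (Bmat ^ n * (Amat ^ m * M) : SL2) ∈ CongruenceSubgroup.Gamma 2 :=
      Subgroup.mul_mem _ (Subgroup.zpow_mem _ hB2 n)
        (Subgroup.mul_mem _ (Subgroup.zpow_mem _ hA2 m) hM)
    obtain ⟨w, hw⟩ := ih ((c + 2*n*(a + 2*m*c)).natAbs) (by omega)
      (Bmat ^ n * (Amat ^ m * M)) hmem (by rw [hM10])
    refine ⟨FreeGroup.of false ^ (-m) * (FreeGroup.of true ^ (-n) * w), ?_⟩
    have hpsiw : psi (FreeGroup.of false ^ (-m) * (FreeGroup.of true ^ (-n) * w))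
        = Amat ^ (-m) * (Bmat ^ (-n) * psi w) := by
      rw [_root_.map_mul, _root_.map_mul, psiA, psiB]
    have hcomm : ∀ x y : SL2, x * (negI * y) = negI * (x * y) := fun x y => by
      rw [← mul_assoc, Subgroup.mem_center_iff.mp negI_mem_center x, mul_assoc]
    rcases hw with hw | hw
    · left
      rw [hpsiw, hw]
      simp [_root_.zpow_neg, inv_mul_cancel_left]
    · right
      rw [hpsiw, hw, hcomm, hcomm]
      congr 1
      simp [_root_.zpow_neg, inv_mul_cancel_left]

lemma phi_eq : FreeGroup.lift afun = (QuotientGroup.mk' (Subgroup.center SL2)).comp psi := by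
  ext b
  cases b <;> simp [afun, psi]

lemma range_eq : (FreeGroup.lift afun).range
    = Subgroup.map (QuotientGroup.mk' (Subgroup.center SL2)) (CongruenceSubgroup.Gamma 2) := by
  apply le_antisymm
  · rw [phi_eq, MonoidHom.range_comp]
    apply Subgroup.map_mono
    apply FreeGroup.range_lift_le
    rintro x ⟨b, rfl⟩
    cases b
    · simpa [psi] using hA2
    · simpa [psi] using hB2
  · rintro x ⟨M, hM, rfl⟩
    obtain ⟨w, hw⟩ := key ((M : Matrix (Fin 2) (Fin 2) ℤ) 1 0).natAbs M hM rfl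
    refine ⟨w, ?_⟩
    rw [phi_eq, MonoidHom.comp_apply]
    rcases hw with hw | hw
    · rw [hw]
    · rw [hw, _root_.map_mul]
      have h1 : QuotientGroup.mk' (Subgroup.center SL2) negI = 1 :=
        (QuotientGroup.eq_one_iff _).mpr negI_mem_center
      rw [h1, one_mul]

end Sanov


/-- The images in `PSL(2,ℤ) = SL(2,ℤ)/{±I}` of `A = [[1,2],[0,1]]` and `B = [[1,0],[2,1]]`
freely generate the image of `Γ(2)`: the homomorphism from the free group on two generators
sending the generators to `π(A)` and `π(B)` is injective with image `π(Γ(2))`. -/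
theorem stmt6 :
    let π := QuotientGroup.mk' (Subgroup.center (Matrix.SpecialLinearGroup (Fin 2) ℤ))
    let A : Matrix.SpecialLinearGroup (Fin 2) ℤ :=
      ⟨!![1, 2; 0, 1], by norm_num [Matrix.det_fin_two_of]⟩
    let B : Matrix.SpecialLinearGroup (Fin 2) ℤ :=
      ⟨!![1, 0; 2, 1], by norm_num [Matrix.det_fin_two_of]⟩
    let φ := FreeGroup.lift (fun b : Bool => if b then π B else π A)
    Function.Injective φ ∧
      MonoidHom.range φ = Subgroup.map π (CongruenceSubgroup.Gamma 2) := by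
  intro π A B φ
  exact ⟨Sanov.pingpong, Sanov.range_eq⟩
end

section
/- Let K be a field of characteristic 0 containing an element r with r² = 2 (e.g., K = ℚ(√2) with r = √2). Define the polynomial f(t) = (2r·t³ − 2(2r+1)·t² + (−4+7r)·t + 1)² · (14t² + 6(r+4)·t − 8r + 31) in K[t]. Then f(t) − 432(4r − 5) = (2t² − 2r + 1)³ · (14t² − 8(r+4)·t − 14r + 63). In particular f is a polynomial of degree 8 whose values 0 and 432(4r−5) are attained with root multiplicities (2,2,2,1,1) and (3,3,1,1) respectively; it is a Belyi map (after rescaling) with passport (0, PGL₂(F₇), (2³1², 3²1², 8¹)). -/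
open Polynomial

/-- Let `K` be a field of characteristic 0 with `r² = 2`, and let
`f(t) = (2r·t³ − 2(2r+1)·t² + (−4+7r)·t + 1)² · (14t² + 6(r+4)·t − 8r + 31)`.
Then `f(t) − 432(4r − 5) = (2t² − 2r + 1)³ · (14t² − 8(r+4)·t − 14r + 63)`, and `f` has
degree 8. -/
theorem stmt12 {K : Type*} [Field K] [CharZero K] (r : K) (hr : r ^ 2 = 2) :
    let f : K[X] :=
      (C (2 * r) * X ^ 3 - C (2 * (2 * r + 1)) * X ^ 2 + C (-4 + 7 * r) * X + 1) ^ 2 *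
        (C 14 * X ^ 2 + C (6 * (r + 4)) * X + C (-8 * r + 31))
    f - C (432 * (4 * r - 5)) =
        (C 2 * X ^ 2 + C (-2 * r + 1)) ^ 3 *
          (C 14 * X ^ 2 - C (8 * (r + 4)) * X + C (-14 * r + 63)) ∧
      f.natDegree = 8 := by
  intro f
  have hr0 : r ≠ 0 := by
    intro h; rw [h] at hr; norm_num at hr
  have hC : (C r : K[X]) ^ 2 = 2 := by
    rw [← C_pow, hr]; exact map_ofNat C 2
  constructor
  · show ((C (2 * r) * X ^ 3 - C (2 * (2 * r + 1)) * X ^ 2 + C (-4 + 7 * r) * X + 1) ^ 2 *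
        (C 14 * X ^ 2 + C (6 * (r + 4)) * X + C (-8 * r + 31))) - C (432 * (4 * r - 5)) = _
    simp only [map_mul, map_add, map_sub, map_neg, map_ofNat, C_1]
    linear_combination ((-1064 : K[X]) + (96) * X + (99) * X^2 + (-432) * X^3 + (82) * X^4 +
      (-352) * X^5 + (308) * X^6 + (-128) * X^7 + (56) * X^8 + (672) * C r +
      (-160) * C r * X + (56) * C r * X^2 + (934) * C r * X^3 + (-688) * C r * X^4 +
      (392) * C r * X^5 + (-128) * C r * X^6 + (24) * C r * X^7 + (-112) * (C r)^2 +
      (-64) * (C r)^2 * X) * hC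
  · show ((C (2 * r) * X ^ 3 - C (2 * (2 * r + 1)) * X ^ 2 + C (-4 + 7 * r) * X + 1) ^ 2 *
        (C 14 * X ^ 2 + C (6 * (r + 4)) * X + C (-8 * r + 31))).natDegree = 8
    compute_degree!
end

section
/- Let K be a field of characteristic different from 2 and let λ ∈ K. In K[x], define s(x) = (−4x³ + 3x + 1)/2 and q(x) = (−4x⁵ + 7x³ − (2λ−1)x² − 3x + (2λ−1))/2. Then the polynomial identity ((−4x² + 1)/2)² · q(x) = s(x)·(s(x) − 1)·(s(x) − λ) holds in K[x]. Consequently, the map (x, y) ↦ (s(x), y·(−4x² + 1)/2) sends points of the hyperelliptic curve y² = q(x) to points of the Legendre elliptic curve y² = x(x−1)(x−λ). -/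
open Polynomial

/-- For a field `K` with `char K ≠ 2` and `λ ∈ K`, with `s(x) = (−4x³ + 3x + 1)/2` and
`q(x) = (−4x⁵ + 7x³ − (2λ−1)x² − 3x + (2λ−1))/2`, one has the polynomial identity
`((−4x² + 1)/2)² · q(x) = s(x)(s(x) − 1)(s(x) − λ)` in `K[x]`; hence
`(x, y) ↦ (s(x), y·(−4x² + 1)/2)` maps the hyperelliptic curve `y² = q(x)` to the Legendre
curve `y² = x(x−1)(x−λ)`. -/
theorem stmt14 {K : Type*} [Field K] (h2 : (2 : K) ≠ 0) (l : K) :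
    let s : K[X] := C (2⁻¹ : K) * (-4 * X ^ 3 + 3 * X + 1)
    let q : K[X] :=
      C (2⁻¹ : K) * (-4 * X ^ 5 + 7 * X ^ 3 - C (2 * l - 1) * X ^ 2 - 3 * X + C (2 * l - 1))
    (C (2⁻¹ : K) * (-4 * X ^ 2 + 1)) ^ 2 * q = s * (s - 1) * (s - C l) := by
  intro s q
  simp only [s, q, C_sub, C_mul, C_1, map_ofNat]
  set t : K[X] := C (2⁻¹ : K) with ht
  set L : K[X] := C l with hL
  have h : (2 : K[X]) * t = 1 := by
    rw [ht, ← map_ofNat (C : K →+* K[X]) 2, ← C_mul, mul_inv_cancel₀ h2, C_1]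
  linear_combination (t * L + 3 * t * L * X - 4 * t * L * X ^ 3 - t ^ 2 - 6 * t ^ 2 * X
    - 9 * t ^ 2 * X ^ 2 + 8 * t ^ 2 * X ^ 3 + 24 * t ^ 2 * X ^ 4 - 16 * t ^ 2 * X ^ 6
    + t ^ 2 * L - 9 * t ^ 2 * L * X ^ 2 + 24 * t ^ 2 * L * X ^ 4 - 16 * t ^ 2 * L * X ^ 6) * h
end
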